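/- Let G be a finite group, H a normal subgroup of G, and a an integer with 0 ≤ a ≤ |H| − 1 such that gcd(2, |H|−1) divides a. Then there exists an inverse-closed subset S of G \ {e} such that H is an (a, |H|)-regular set in Cay(G,S). -/

import Mathlib

/-- The Cayley graph of a group `G` with connection set `S`:
`x` is adjacent to `y` iff `y * x⁻¹ ∈ S` (symmetrized; for inverse-closed `S`
not containing `1` this is the usual Cayley graph). -/
def cayley {G : Type*} [Group G] (S : Set G) : SimpleGraph G :=
  SimpleGraph.fromRel (fun x y => y * x⁻¹ ∈ S)

/-- `C` is an `(a,b)`-regular set in `Γ`: every vertex in `C` has exactly `a`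
neighbors in `C`, and every vertex outside `C` has exactly `b` neighbors in `C`. -/
def IsRegularSet {V : Type*} (Γ : SimpleGraph V) (C : Set V) (a b : ℕ) : Prop :=
  (∀ v ∈ C, (Γ.neighborSet v ∩ C).ncard = a) ∧
  (∀ v ∉ C, (Γ.neighborSet v ∩ C).ncard = b)

/-- In a finite set closed under an involution, there is a closed subset of any even size. -/
lemma evenLemma {G : Type*} [DecidableEq G] (f : G → G) (hf : ∀ x, f (f x) = x) :
    ∀ (k : ℕ) (T : Finset G), (∀ x ∈ T, f x ∈ T) → 2 * k ≤ T.card →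
    ∃ A : Finset G, A ⊆ T ∧ A.card = 2 * k ∧ ∀ x ∈ A, f x ∈ A := by
  intro k
  induction k with
  | zero => intro T _ _; exact ⟨∅, by simp⟩
  | succ k ih =>
    intro T hT hcard
    by_cases hex : ∃ x ∈ T, f x ≠ x
    · obtain ⟨x, hx, hfx⟩ := hex
      have hfxT : f x ∈ T := hT x hx
      have hsub : ∀ y ∈ T \ {x, f x}, f y ∈ T \ {x, f x} := by
        intro y hy
        simp only [Finset.mem_sdiff, Finset.mem_insert, Finset.mem_singleton] at hy ⊢
        refine ⟨hT y hy.1, ?_⟩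
        push_neg at hy ⊢
        refine ⟨fun h => hy.2.2 ?_, fun h => hy.2.1 ?_⟩
        · rw [← h, hf]
        · have := congrArg f h; rwa [hf, hf] at this
      have hpair : ({x, f x} : Finset G).card = 2 := Finset.card_pair (Ne.symm hfx)
      have hcard' : (T \ {x, f x}).card = T.card - 2 := by
        rw [Finset.card_sdiff_of_subset (by
          intro y hy
          simp only [Finset.mem_insert, Finset.mem_singleton] at hy
          rcases hy with h | h <;> subst h <;> assumption), hpair]
      have hle : 2 * k ≤ (T \ {x, f x}).card := by omega
      obtain ⟨A, hAT, hAcard, hAcl⟩ := ih (T \ {x, f x}) hsub hle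
      have hxA : x ∉ A := fun h => by simpa using (hAT h)
      have hfxA : f x ∉ A := fun h => by simpa using (hAT h)
      refine ⟨insert x (insert (f x) A), ?_, ?_, ?_⟩
      · intro y hy
        simp only [Finset.mem_insert] at hy
        rcases hy with rfl | rfl | hy
        · exact hx
        · exact hfxT
        · exact (Finset.mem_sdiff.mp (hAT hy)).1
      · rw [Finset.card_insert_of_notMem (by simp [hxA, Ne.symm hfx]),
          Finset.card_insert_of_notMem hfxA, hAcard]
        ring
      · intro y hy
        simp only [Finset.mem_insert] at hy ⊢
        rcases hy with rfl | rfl | hy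
        · right; left; rfl
        · left; exact hf x
        · right; right; exact hAcl y hy
    · push_neg at hex
      obtain ⟨A, hAT, hAcard⟩ := Finset.exists_subset_card_eq hcard
      exact ⟨A, hAT, hAcard, fun x hx => by rw [hex x (hAT hx)]; exact hx⟩

lemma exists_inv_closed {G : Type*} [Group G] [Fintype G] (H : Subgroup G)
    (a : ℕ) (ha : a ≤ Nat.card H - 1) (hdvd : Nat.gcd 2 (Nat.card H - 1) ∣ a) :
    ∃ A : Finset G, (∀ x ∈ A, x ∈ H ∧ x ≠ 1) ∧ A.card = a ∧ ∀ x ∈ A, x⁻¹ ∈ A := by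
  classical
  set T : Finset G := (Set.toFinset (H : Set G)).erase 1 with hTdef
  have hmemT : ∀ x, x ∈ T ↔ x ≠ 1 ∧ x ∈ H := by
    intro x; simp [hTdef]
  have hTcard : T.card = Nat.card H - 1 := by
    rw [hTdef, Finset.card_erase_of_mem (Set.mem_toFinset.mpr (one_mem H))]
    have h1 : (↑H : Set G).toFinset.card = Nat.card ↥H := by
      rw [← Set.ncard_eq_toFinset_card', ← Nat.card_coe_set_eq, SetLike.coe_sort_coe]
    rw [h1]
  have hTinv : ∀ x ∈ T, x⁻¹ ∈ T := by
    intro x hx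
    rw [hmemT] at hx ⊢
    exact ⟨fun h => hx.1 (by simpa using congrArg (·⁻¹) h), inv_mem hx.2⟩
  rcases Nat.even_or_odd a with hpar | hpar
  · obtain ⟨k, hk⟩ := hpar
    obtain ⟨A, hAT, hAcard, hAcl⟩ := evenLemma (·⁻¹) (fun x => inv_inv x) k T hTinv
      (by rw [hTcard]; omega)
    exact ⟨A, fun x hx => ((hmemT x).mp (hAT hx)).symm.imp id (fun h => h), by omega, hAcl⟩
  · -- a odd, so gcd 2 (card H - 1) = 1, so card H - 1 is odd, so card H is even
    have hodd : ¬ (2 ∣ a) := by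
      rcases hpar with ⟨k, hk⟩; omega
    have hgdvd : Nat.gcd 2 (Nat.card H - 1) ∣ 2 := Nat.gcd_dvd_left _ _
    have hgne : Nat.gcd 2 (Nat.card H - 1) ≠ 2 := fun h => hodd (h ▸ hdvd)
    have hgpos : 0 < Nat.gcd 2 (Nat.card H - 1) := Nat.gcd_pos_of_pos_left _ (by norm_num)
    have hgle : Nat.gcd 2 (Nat.card H - 1) ≤ 2 := Nat.le_of_dvd (by norm_num) hgdvd
    have hgcd : Nat.gcd 2 (Nat.card H - 1) = 1 := by omega
    have hnodd : ¬ (2 ∣ (Nat.card H - 1)) := by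
      intro h
      have := Nat.dvd_gcd (dvd_refl 2) h
      omega
    have hpos : 0 < Nat.card H := Nat.card_pos
    have hHeven : 2 ∣ Nat.card H := by omega
    have : Fact (Nat.Prime 2) := ⟨Nat.prime_two⟩
    obtain ⟨g, hg⟩ := exists_prime_orderOf_dvd_card (G := ↥H) 2
      (by rwa [← Nat.card_eq_fintype_card])
    have hgne1 : g ≠ 1 := by
      intro h; rw [h, orderOf_one] at hg; omega
    set x : G := (g : G) with hxdef
    have hxH : x ∈ H := g.2
    have hxne1 : x ≠ 1 := by
      intro h
      exact hgne1 (by ext; simpa [hxdef] using h)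
    have hxsq : x * x = 1 := by
      have h2 : g ^ 2 = 1 := by rw [← hg]; exact pow_orderOf_eq_one g
      have := congrArg (Subtype.val) h2
      simpa [pow_two] using this
    have hxinv : x⁻¹ = x := inv_eq_of_mul_eq_one_right hxsq
    have hxT : x ∈ T := (hmemT x).mpr ⟨hxne1, hxH⟩
    have hT'inv : ∀ y ∈ T.erase x, y⁻¹ ∈ T.erase x := by
      intro y hy
      rw [Finset.mem_erase] at hy ⊢
      refine ⟨fun h => hy.1 ?_, hTinv y hy.2⟩
      rw [← inv_inv y, h, hxinv]
    obtain ⟨k, hk⟩ := hpar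
    have hle : 2 * k ≤ (T.erase x).card := by
      rw [Finset.card_erase_of_mem hxT, hTcard]
      omega
    obtain ⟨A, hAT, hAcard, hAcl⟩ := evenLemma (·⁻¹) (fun y => inv_inv y) k (T.erase x) hT'inv hle
    have hxA : x ∉ A := fun h => by simpa using (hAT h)
    refine ⟨insert x A, ?_, ?_, ?_⟩
    · intro y hy
      rcases Finset.mem_insert.mp hy with rfl | hy
      · exact ⟨hxH, hxne1⟩
      · have := (hmemT y).mp (Finset.mem_erase.mp (hAT hy)).2
        exact ⟨this.2, this.1⟩
    · rw [Finset.card_insert_of_notMem hxA, hAcard]; omega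
    · intro y hy
      rcases Finset.mem_insert.mp hy with rfl | hy
      · rw [hxinv]; exact Finset.mem_insert_self _ _
      · exact Finset.mem_insert_of_mem (hAcl y hy)

theorem stmt9 {G : Type*} [Group G] [Fintype G] (H : Subgroup G) [H.Normal]
    (a : ℕ) (ha : a ≤ Nat.card H - 1) (hdvd : Nat.gcd 2 (Nat.card H - 1) ∣ a) :
    ∃ S : Set G, S⁻¹ = S ∧ (1 : G) ∉ S ∧
      IsRegularSet (cayley S) (H : Set G) a (Nat.card H) := by
  classical
  obtain ⟨A, hAH, hAcard, hAinv⟩ := exists_inv_closed H a ha hdvd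
  set S : Set G := (↑A : Set G) ∪ (↑H : Set G)ᶜ with hSdef
  have hmemS : ∀ x, x ∈ S ↔ (x ∈ A ∨ x ∉ H) := by
    intro x; simp [hSdef]
  refine ⟨S, ?_, ?_, ?_, ?_⟩
  · ext x
    rw [Set.mem_inv, hmemS, hmemS]
    constructor
    · rintro (h | h)
      · left; have := hAinv _ h; simpa using this
      · right; intro hx; exact h (inv_mem hx)
    · rintro (h | h)
      · left; exact hAinv _ h
      · right; intro hx; exact h (by simpa using inv_mem hx)
  · rw [hmemS]
    rintro (h | h)
    · exact (hAH 1 h).2 rfl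
    · exact h (one_mem H)
  · intro v hv
    have hv' : v ∈ H := hv
    have hset : (cayley S).neighborSet v ∩ (H : Set G) = (fun x => x * v) '' ↑A := by
      ext w
      simp only [Set.mem_inter_iff, SimpleGraph.mem_neighborSet, cayley,
        SimpleGraph.fromRel_adj, Set.mem_image, Finset.mem_coe, SetLike.mem_coe]
      constructor
      · rintro ⟨⟨hne, hor⟩, hwH⟩
        have hA : w * v⁻¹ ∈ A := by
          rcases hor with h | h
          · rcases (hmemS _).mp h with h' | h'
            · exact h'
            · exact absurd (mul_mem hwH (inv_mem hv')) h'
          · rcases (hmemS _).mp h with h' | h'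
            · have := hAinv _ h'; simpa [mul_inv_rev] using this
            · exact absurd (mul_mem hv' (inv_mem hwH)) h'
        exact ⟨w * v⁻¹, hA, by group⟩
      · rintro ⟨x, hxA, rfl⟩
        have hx := hAH x hxA
        refine ⟨⟨?_, Or.inl ((hmemS _).mpr (Or.inl (by simpa using hxA)))⟩, mul_mem hx.1 hv'⟩
        intro h
        exact hx.2 (mul_eq_right.mp h.symm)
    rw [hset, Set.ncard_image_of_injective _ (mul_left_injective v),
      Set.ncard_coe_finset, hAcard]
  · intro v hv
    have hv' : v ∉ H := hv
    have hset : (cayley S).neighborSet v ∩ (H : Set G) = (H : Set G) := by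
      apply Set.inter_eq_right.mpr
      intro w hw
      have hwH : w ∈ H := hw
      rw [SimpleGraph.mem_neighborSet, cayley, SimpleGraph.fromRel_adj]
      refine ⟨fun h => hv' (h ▸ hwH), Or.inl ((hmemS _).mpr (Or.inr ?_))⟩
      intro h
      exact hv' (by simpa using mul_mem (inv_mem h) hwH)
    rw [hset, ← Nat.card_coe_set_eq, SetLike.coe_sort_coe]
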